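/- In any algebra (S,*,') satisfying the three axioms, the identity x'' = (x'' * x') * x holds for all x in S. -/
import Mathlib


theorem stmt (S : Type*) (m : S → S → S) (i : S → S)
    (E1 : ∀ x, m (m x (i x)) x = x)
    (E2 : ∀ x y, m (m x (i x)) (m (i y) y) = m (m (i y) y) (m x (i x)))
    (E3 : ∀ x y z, m (m x y) z = m x (m y (i (i z)))) :
    ∀ x, i (i x) = m (m (i (i x)) (i x)) x := by
  -- A : a (a' a'') = a
  have A : ∀ a, m a (m (i a) (i (i a))) = a := by
    intro a; rw [← E3]; exact E1 a
  -- L4 : (x (y'' y''')) y = x y''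
  have L4 : ∀ x y, m (m x (m (i (i y)) (i (i (i y))))) y = m x (i (i y)) := by
    intro x y; rw [E3, E1]
  -- L10 : x' x'' = x' x
  have L10 : ∀ x, m (i x) (i (i x)) = m (i x) x := by
    intro x
    have h := L4 (i x) x
    rw [A (i x)] at h
    exact h.symm
  -- L15 : (x y') y = x (y' y)
  have L15 : ∀ x y, m (m x (i y)) y = m x (m (i y) y) := by
    intro x y; rw [E3, L10]
  -- L32 : x' (x'' x') = (x' x) x'
  have L32 : ∀ x, m (i x) (m (i (i x)) (i x)) = m (m (i x) x) (i x) := by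
    intro x
    have h := L15 (i x) (i x)
    rw [L10] at h
    exact h.symm
  intro x
  calc i (i x)
      = m (m (i (i x)) (i (i (i x)))) (i (i x)) := (E1 (i (i x))).symm
    _ = m (m (i (i x)) (i x)) (i (i x)) := by rw [L10 (i x)]
    _ = m (i (i x)) (m (i (i (i x))) (i (i x))) := (L32 (i x)).symm
    _ = m (m (i (i x)) (i (i (i x)))) x := (E3 (i (i x)) (i (i (i x))) x).symm
    _ = m (m (i (i x)) (i x)) x := by rw [L10 (i x)]
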